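/- arXiv:1502.00766 — 3 statements merged into one kernel-verified Lean document; each statement's English description precedes it below -/
import Mathlib

section
/- Let R be a commutative ring and C a semidualizing R-module. If 0 → W' → W → W'' → 0 is a short exact sequence of R-modules with W' and W'' both C-projective, then W is C-projective. -/
open CategoryTheory CategoryTheory.Limits TensorProduct

noncomputable section

variable (R : Type) [CommRing R]

/-- The category of (cochain) complexes of `R`-modules. -/
abbrev Cx := CochainComplex (ModuleCat.{0} R) ℤ

/-- `M` is `C`-projective: `M ≅ C ⊗ P` for some projective `P`. -/
def IsCProj (C M : ModuleCat.{0} R) : Prop :=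
  ∃ P : ModuleCat.{0} R, Projective P ∧ Nonempty (M ≅ ModuleCat.of R (↥C ⊗[R] ↥P))

/-- `M` is `C`-flat: `M ≅ C ⊗ F` for some flat `F`. -/
def IsCFlat (C M : ModuleCat.{0} R) : Prop :=
  ∃ F : ModuleCat.{0} R, Module.Flat R ↥F ∧ Nonempty (M ≅ ModuleCat.of R (↥C ⊗[R] ↥F))

/-- Semidualizing module. -/
structure IsSemidualizing (C : ModuleCat.{0} R) : Prop where
  resolution : ∃ (P : ChainComplex (ModuleCat.{0} R) ℕ)
      (π : P ⟶ (ChainComplex.single₀ (ModuleCat.{0} R)).obj C),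
      (∀ n, Projective (P.X n)) ∧ (∀ n, Module.Finite R ↥(P.X n)) ∧ QuasiIso π
  homothety : Function.Bijective (fun r : R => r • (LinearMap.id : ↥C →ₗ[R] ↥C))
  ext_vanish : ∀ n : ℕ, 0 < n →
    Subsingleton (((Ext R (ModuleCat.{0} R) n).obj (Opposite.op C)).obj C)

/-- Exactness of `Hom(E, W)` at every spot, for `E` a complex of modules. -/
def HomSeqExact (E : Cx R) (W : ModuleCat.{0} R) : Prop :=
  ∀ n : ℤ, Function.Exact (fun g : E.X (n + 1) ⟶ W => E.d n (n + 1) ≫ g)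
    (fun h : E.X n ⟶ W => E.d (n - 1) n ≫ h)

/-- `M` is a `D_C`-projective module. -/
def IsDCProj (C M : ModuleCat.{0} R) : Prop :=
  ∃ E : Cx R, (∀ n, E.ExactAt n) ∧ (∀ n : ℤ, n ≤ 0 → Projective (E.X n)) ∧
    (∀ n : ℤ, 0 < n → IsCProj R C (E.X n)) ∧
    (∀ W : ModuleCat.{0} R, IsCFlat R C W → HomSeqExact R E W) ∧
    Nonempty (M ≅ Limits.image (E.d 0 1))

/-- `X` is an exact complex whose cycles all satisfy `P`. -/
def IsClassCx (P : ModuleCat.{0} R → Prop) (X : Cx R) : Prop :=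
  (∀ i, X.ExactAt i) ∧ ∀ i, P (X.cycles i)

/-- Projective complex. -/
def IsProjCx (X : Cx R) : Prop := IsClassCx R (fun M => Projective M) X

/-- `C`-projective complex. -/
def IsCProjCx (C : ModuleCat.{0} R) (X : Cx R) : Prop := IsClassCx R (IsCProj R C) X

/-- `C`-flat complex. -/
def IsCFlatCx (C : ModuleCat.{0} R) (X : Cx R) : Prop := IsClassCx R (IsCFlat R C) X

/-- Exactness of `Hom(E, H)` for a sequence of complexes `E`. -/
def HomCxSeqExact (E : CochainComplex (Cx R) ℤ) (H : Cx R) : Prop :=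
  ∀ n : ℤ, Function.Exact (fun g : E.X (n + 1) ⟶ H => E.d n (n + 1) ≫ g)
    (fun h : E.X n ⟶ H => E.d (n - 1) n ≫ h)

/-- `X` is a `D_C`-projective complex. -/
def IsDCProjCx (C : ModuleCat.{0} R) (X : Cx R) : Prop :=
  ∃ E : CochainComplex (Cx R) ℤ, (∀ n, E.ExactAt n) ∧
    (∀ n : ℤ, n ≤ 0 → IsProjCx R (E.X n)) ∧
    (∀ n : ℤ, 0 < n → IsCProjCx R C (E.X n)) ∧
    (∀ H : Cx R, IsCFlatCx R C H → HomCxSeqExact R E H) ∧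
    Nonempty (X ≅ Limits.image (E.d 0 1))

/-- The total Hom-complex `𝓗om(X, H)` is exact. -/
def HomComplexExact (X H : Cx R) : Prop :=
  ∀ n : ℤ, (CochainComplex.HomComplex X H).ExactAt n

/-- `Ext^m(X, H) = 0` in the category of complexes. -/
def ExtCxZero (X H : Cx R) (m : ℕ) : Prop :=
  letI : HasDerivedCategory (Cx R) := HasDerivedCategory.standard _
  letI : HasExt (Cx R) := hasExt_of_hasDerivedCategory _
  Subsingleton (Abelian.Ext X H m)


/-- Exactness of `0 → Hom(X,H) → Hom(G0,H) → Hom(G1,H) → Hom(A,H) → 0`, i.e. the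
four-term exact sequence `0 → A → G1 → G0 → X → 0` of complexes stays exact under
`Hom(-, H)`. -/
def HomFourExact {A G1 G0 X : Cx R} (a : A ⟶ G1) (b : G1 ⟶ G0) (c : G0 ⟶ X)
    (H : Cx R) : Prop :=
  Function.Injective (fun g : X ⟶ H => c ≫ g) ∧
  Function.Exact (fun g : X ⟶ H => c ≫ g) (fun g : G0 ⟶ H => b ≫ g) ∧
  Function.Exact (fun g : G0 ⟶ H => b ≫ g) (fun g : G1 ⟶ H => a ≫ g) ∧
  Function.Surjective (fun g : G1 ⟶ H => a ≫ g)

/-- `D_C`-projective dimension of the complex `X` is at most `n`: there is an exact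
sequence `0 → G_n → ⋯ → G_0 → X → 0` (here `G_{n-i}` sits in position `i` and `X` in
position `n+1`) with all `G_i` `D_C`-projective complexes. -/
def DCpdLE (C : ModuleCat.{0} R) (X : Cx R) (n : ℕ) : Prop :=
  ∃ E : CochainComplex (Cx R) ℤ, (∀ i, E.ExactAt i) ∧
    (∀ i : ℤ, i < 0 → IsZero (E.X i)) ∧ (∀ i : ℤ, (n : ℤ) + 1 < i → IsZero (E.X i)) ∧
    (∀ i : ℤ, 0 ≤ i → i ≤ (n : ℤ) → IsDCProjCx R C (E.X i)) ∧
    Nonempty (E.X ((n : ℤ) + 1) ≅ X)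

/-- `C`-projective dimension (`𝒫_C`-pd) of the complex `X` is at most `n`. -/
def CpdLE (C : ModuleCat.{0} R) (X : Cx R) (n : ℕ) : Prop :=
  ∃ E : CochainComplex (Cx R) ℤ, (∀ i, E.ExactAt i) ∧
    (∀ i : ℤ, i < 0 → IsZero (E.X i)) ∧ (∀ i : ℤ, (n : ℤ) + 1 < i → IsZero (E.X i)) ∧
    (∀ i : ℤ, 0 ≤ i → i ≤ (n : ℤ) → IsCProjCx R C (E.X i)) ∧
    Nonempty (E.X ((n : ℤ) + 1) ≅ X)

namespace CProjAux

variable {R : Type} [CommRing R]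

variable {P2 P1 P0 : Type} [AddCommGroup P2] [Module R P2]
  [AddCommGroup P1] [Module R P1] [AddCommGroup P0] [Module R P0]

/-- Every cocycle `P1 → M` extends to `P0`. -/
def Lift1 (d2 : P2 →ₗ[R] P1) (d1 : P1 →ₗ[R] P0) (M : Type) [AddCommGroup M]
    [Module R M] : Prop :=
  ∀ α : P1 →ₗ[R] M, α ∘ₗ d2 = 0 → ∃ β : P0 →ₗ[R] M, β ∘ₗ d1 = α

variable {d2 : P2 →ₗ[R] P1} {d1 : P1 →ₗ[R] P0}

lemma Lift1.retract {M N : Type} [AddCommGroup M] [Module R M] [AddCommGroup N]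
    [Module R N] (hN : Lift1 d2 d1 N) (i : M →ₗ[R] N) (r : N →ₗ[R] M)
    (hri : ∀ x, r (i x) = x) : Lift1 d2 d1 M := by
  intro α hα
  obtain ⟨β, hβ⟩ := hN (i ∘ₗ α) (by
    rw [LinearMap.comp_assoc, hα, LinearMap.comp_zero])
  refine ⟨r ∘ₗ β, ?_⟩
  ext x
  have h1 : β (d1 x) = i (α x) := by
    have := congrArg (fun f => f x) hβ; simpa using this
  simp [h1, hri]

lemma Lift1.of_equiv {M N : Type} [AddCommGroup M] [Module R M] [AddCommGroup N]
    [Module R N] (hN : Lift1 d2 d1 N) (e : M ≃ₗ[R] N) : Lift1 d2 d1 M :=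
  hN.retract e.toLinearMap e.symm.toLinearMap (fun x => e.symm_apply_apply x)

lemma Lift1.pi {ι : Type} (M : ι → Type) [∀ j, AddCommGroup (M j)]
    [∀ j, Module R (M j)] (h : ∀ j, Lift1 d2 d1 (M j)) :
    Lift1 d2 d1 (∀ j, M j) := by
  intro α hα
  choose β hβ using fun j => h j ((LinearMap.proj j) ∘ₗ α) (by
    rw [LinearMap.comp_assoc, hα, LinearMap.comp_zero])
  refine ⟨LinearMap.pi β, ?_⟩
  ext x j
  have := congrArg (fun f => f x) (hβ j)
  simpa using this

lemma Lift1.finsupp [Module.Finite R P1] {ι M : Type} [AddCommGroup M]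
    [Module R M] (hM : Lift1 d2 d1 M) : Lift1 d2 d1 (ι →₀ M) := by
  classical
  intro α hα
  obtain ⟨T, hT⟩ : (LinearMap.range α).FG := by
    have : Module.Finite R (LinearMap.range α) := Module.Finite.range α
    exact (Module.Finite.iff_fg (N := LinearMap.range α)).mp this
  set s : Finset ι := T.sup fun t => t.support with hs
  have hrange : LinearMap.range α ≤ Finsupp.supported M R (s : Set ι) := by
    rw [← hT, Submodule.span_le]
    intro t ht
    rw [SetLike.mem_coe, Finsupp.mem_supported]
    intro j hj
    have hsub : t.support ⊆ s := Finset.le_sup (f := fun t => t.support) ht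
    exact Finset.mem_coe.mpr (hsub hj)
  set V := Finsupp.supported M R (s : Set ι) with hVdef
  have hV : Lift1 d2 d1 V := by
    have h1 : Lift1 d2 d1 (↥(s : Set ι) → M) := Lift1.pi _ (fun _ => hM)
    have e : V ≃ₗ[R] (↥(s : Set ι) → M) :=
      (Finsupp.supportedEquivFinsupp (s : Set ι)).trans
        (Finsupp.linearEquivFunOnFinite R M ↥(s : Set ι))
    exact h1.of_equiv e
  set α' : P1 →ₗ[R] V := α.codRestrict V (fun x => hrange ⟨x, rfl⟩) with hα'def
  obtain ⟨β', hβ'⟩ := hV α' (by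
    apply LinearMap.ext; intro x
    apply Subtype.ext
    show α (d2 x) = 0
    have := congrArg (fun f => f x) hα; simpa using this)
  refine ⟨V.subtype ∘ₗ β', ?_⟩
  apply LinearMap.ext; intro x
  have h2 : β' (d1 x) = α' x := congrArg (fun f => f x) hβ'
  have h3 : (β' (d1 x) : ι →₀ M) = α x := by
    rw [h2]; rfl
  simpa using h3

lemma Lift1.tensor [Module.Finite R P1] {C Q : Type} [AddCommGroup C] [Module R C]
    [AddCommGroup Q] [Module R Q] (hQ : Module.Projective R Q)
    (hC : Lift1 d2 d1 C) : Lift1 d2 d1 (C ⊗[R] Q) := by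
  classical
  obtain ⟨σ, hσ⟩ := Module.projective_def.mp hQ
  have hfin : Lift1 d2 d1 (Q →₀ C) := hC.finsupp
  refine hfin.retract
    ((TensorProduct.finsuppScalarRight R R C Q).toLinearMap ∘ₗ
      (LinearMap.lTensor C σ))
    ((LinearMap.lTensor C (Finsupp.linearCombination R (id : Q → Q))) ∘ₗ
      (TensorProduct.finsuppScalarRight R R C Q).symm.toLinearMap) ?_
  intro x
  simp only [LinearMap.comp_apply, LinearEquiv.coe_coe, LinearEquiv.symm_apply_apply]
  rw [← LinearMap.comp_apply, ← LinearMap.lTensor_comp]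
  have h : Finsupp.linearCombination R (id : Q → Q) ∘ₗ σ = LinearMap.id := by
    apply LinearMap.ext; intro q; exact hσ q
  rw [h, LinearMap.lTensor_id, LinearMap.id_apply]


variable {R : Type} [CommRing R]
variable {P2 P1 P0 : Type} [AddCommGroup P2] [Module R P2]
  [AddCommGroup P1] [Module R P1] [AddCommGroup P0] [Module R P0]
variable {d2 : P2 →ₗ[R] P1} {d1 : P1 →ₗ[R] P0}


/-- The key lifting lemma: maps `C' → W''` lift along a surjection whose kernel
satisfies `Lift1`. -/
lemma key_lift {C' W W'' : Type} [AddCommGroup C'] [Module R C']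
    [AddCommGroup W] [Module R W] [AddCommGroup W''] [Module R W'']
    (hP0 : Module.Projective R P0) (hd : d1 ∘ₗ d2 = 0)
    (ε : P0 →ₗ[R] C') (hεs : Function.Surjective ε)
    (hex : Function.Exact d1 ε)
    (g : W →ₗ[R] W'') (hg : Function.Surjective g)
    (hker : Lift1 d2 d1 (LinearMap.ker g))
    (φ : C' →ₗ[R] W'') : ∃ ψ : C' →ₗ[R] W, g ∘ₗ ψ = φ := by
  obtain ⟨ψ0, hψ0⟩ := Module.projective_lifting_property g (φ ∘ₗ ε) hg
  have hψ0' : ∀ x, g (ψ0 x) = φ (ε x) := fun x => congrArg (fun f => f x) hψ0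
  have hmem : ∀ x : P1, ψ0 (d1 x) ∈ LinearMap.ker g := by
    intro x
    rw [LinearMap.mem_ker, hψ0' (d1 x), hex.apply_apply_eq_zero, map_zero]
  set α : P1 →ₗ[R] LinearMap.ker g := (ψ0 ∘ₗ d1).codRestrict _ hmem with hαdef
  obtain ⟨β, hβ⟩ := hker α (by
    apply LinearMap.ext; intro x
    apply Subtype.ext
    show ψ0 (d1 (d2 x)) = 0
    have : d1 (d2 x) = 0 := congrArg (fun f => f x) hd
    rw [this, map_zero])
  set ψ' : P0 →ₗ[R] W := ψ0 - (LinearMap.ker g).subtype ∘ₗ β with hψ'def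
  have hψ'd : ∀ x : P1, ψ' (d1 x) = 0 := by
    intro x
    have h1 : (β (d1 x) : W) = ψ0 (d1 x) := by
      have := congrArg (fun f => f x) hβ
      exact congrArg Subtype.val this
    simp [hψ'def, h1]
  have hker' : LinearMap.ker ε ≤ LinearMap.ker ψ' := by
    intro x hx
    rw [LinearMap.mem_ker] at hx ⊢
    obtain ⟨y, rfl⟩ := (hex x).mp hx
    exact hψ'd y
  have hgψ' : ∀ x, g (ψ' x) = φ (ε x) := by
    intro x
    simp [hψ'def, hψ0' x]
  -- descend `ψ'` along the surjection `ε`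
  set e := LinearMap.quotKerEquivOfSurjective ε hεs with hedef
  set ψ : C' →ₗ[R] W := (Submodule.liftQ (LinearMap.ker ε) ψ' hker') ∘ₗ
    e.symm.toLinearMap with hψdef
  have hmk : ∀ x : P0, e.symm (ε x) = Submodule.Quotient.mk x := by
    intro x
    apply e.injective
    rw [e.apply_symm_apply]
    rfl
  have hψε : ∀ x : P0, ψ (ε x) = ψ' x := by
    intro x
    simp only [hψdef, LinearMap.comp_apply, LinearEquiv.coe_coe, hmk x]
    rfl
  refine ⟨ψ, ?_⟩
  apply LinearMap.ext; intro c
  obtain ⟨x, rfl⟩ := hεs c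
  simp [hψε x, hgψ' x]

/-- Construct a section of `g` from the lifting property, when `W''` is a retract
of `J →₀ C'`. -/
lemma section_of_lift {C' W W'' J : Type} [AddCommGroup C'] [Module R C']
    [AddCommGroup W] [Module R W] [AddCommGroup W''] [Module R W'']
    (g : W →ₗ[R] W'')
    (lift : ∀ φ : C' →ₗ[R] W'', ∃ ψ : C' →ₗ[R] W, g ∘ₗ ψ = φ)
    (i : W'' →ₗ[R] (J →₀ C')) (r : (J →₀ C') →ₗ[R] W'')
    (hri : ∀ x, r (i x) = x) : ∃ s : W'' →ₗ[R] W, ∀ x, g (s x) = x := by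
  choose t ht using fun j : J => lift (r ∘ₗ Finsupp.lsingle j)
  set T : (J →₀ C') →ₗ[R] W := Finsupp.lsum R t with hTdef
  have hgT : ∀ y : J →₀ C', g (T y) = r y := by
    intro y
    have : (g ∘ₗ T) = r := by
      apply Finsupp.lhom_ext'
      intro j
      rw [LinearMap.comp_assoc]
      rw [hTdef]
      rw [Finsupp.lsum_comp_lsingle]
      exact ht j
    exact congrArg (fun f => f y) this
  exact ⟨T ∘ₗ i, fun x => by simp [hgT, hri]⟩

/-- A short exact sequence with a section gives a product decomposition. -/
def prodEquivOfSection {W' W W'' : Type} [AddCommGroup W'] [Module R W']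
    [AddCommGroup W] [Module R W] [AddCommGroup W''] [Module R W'']
    (f : W' →ₗ[R] W) (g : W →ₗ[R] W'') (hf : Function.Injective f)
    (hex : Function.Exact f g) (s : W'' →ₗ[R] W) (hs : ∀ x, g (s x) = x) :
    (W' × W'') ≃ₗ[R] W := by
  refine LinearEquiv.ofBijective (f.coprod s) ⟨?_, ?_⟩
  · intro a b hab
    obtain ⟨a1, a2⟩ := a; obtain ⟨b1, b2⟩ := b
    simp only [LinearMap.coprod_apply] at hab
    have h2 : a2 = b2 := by
      have := congrArg g hab
      simpa [hs, map_add, hex.apply_apply_eq_zero] using this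
    subst h2
    have h1 : f a1 = f b1 := by
      have := add_right_cancel hab
      exact this
    exact Prod.ext (hf h1) rfl
  · intro w
    have hw : g (w - s (g w)) = 0 := by simp [map_sub, hs]
    obtain ⟨a, ha⟩ := (hex _).mp hw
    exact ⟨(a, g w), by simp [ha]⟩

lemma lift1C (C : ModuleCat.{0} R) (PR : ProjectiveResolution C)
    (hext : Subsingleton (((Ext R (ModuleCat.{0} R) 1).obj (Opposite.op C)).obj C)) :
    Lift1 (R := R) (P2 := ↥(PR.complex.X 2)) (P1 := ↥(PR.complex.X 1))
      (P0 := ↥(PR.complex.X 0)) (PR.complex.d 2 1).hom (PR.complex.d 1 0).hom ↥C := by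
  set K := PR.complex.linearYonedaObj R C with hK
  haveI : Subsingleton ↥(K.homology 1) :=
    Equiv.subsingleton ((PR.isoExt 1 C).toLinearEquiv.symm.toEquiv)
  have hz : IsZero (K.homology 1) := ModuleCat.isZero_of_subsingleton _
  have hK1 : K.ExactAt 1 :=
    (HomologicalComplex.exactAt_iff_isZero_homology K 1).mpr hz
  have hsc := (HomologicalComplex.exactAt_iff' K 0 1 2 (by simp) (by simp)).mp hK1
  have hmod := (ShortComplex.moduleCat_exact_iff _).mp hsc
  intro α hα
  obtain ⟨β, hβ⟩ := hmod (ModuleCat.ofHom α) (by exact ModuleCat.hom_ext hα)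
  exact ⟨β.hom, congrArg ModuleCat.Hom.hom hβ⟩


lemma projective_prod {A B : Type} [AddCommGroup A] [Module R A]
    [AddCommGroup B] [Module R B] (hA : Module.Projective R A)
    (hB : Module.Projective R B) : Module.Projective R (A × B) := by
  obtain ⟨sA, hsA⟩ := Module.projective_def.mp hA
  obtain ⟨sB, hsB⟩ := Module.projective_def.mp hB
  refine Module.Projective.of_split
    (M := (A →₀ R) × (B →₀ R)) (LinearMap.prodMap sA sB)
    (LinearMap.prodMap (Finsupp.linearCombination R id)
      (Finsupp.linearCombination R id)) ?_
  apply LinearMap.ext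
  rintro ⟨a, b⟩
  simp [hsA a, hsB b]

end CProjAux

/-- If `0 → W' → W → W'' → 0` is a short exact sequence of `R`-modules with
`W'` and `W''` both `C`-projective, then `W` is `C`-projective. -/
theorem cProj_of_shortExact (C : ModuleCat.{0} R) (hC : IsSemidualizing R C)
    (W' W W'' : ModuleCat.{0} R) (f : W' ⟶ W) (g : W ⟶ W'') (w : f ≫ g = 0)
    (hse : (ShortComplex.mk f g w).ShortExact)
    (h' : IsCProj R C W') (h'' : IsCProj R C W'') : IsCProj R C W := by
  classical
  obtain ⟨P', hP'proj, ⟨e'⟩⟩ := h'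
  obtain ⟨P'', hP''proj, ⟨e''⟩⟩ := h''
  obtain ⟨Pc, π, hproj, hfin, hqis⟩ := hC.resolution
  let PR : ProjectiveResolution C :=
    { complex := Pc, projective := hproj, π := π, quasiIso := hqis }
  haveI : Module.Finite R ↥(Pc.X 1) := hfin 1
  -- module-level data of the resolution
  set d2 : ↥(Pc.X 2) →ₗ[R] ↥(Pc.X 1) := (Pc.d 2 1).hom with hd2def
  set d1 : ↥(Pc.X 1) →ₗ[R] ↥(Pc.X 0) := (Pc.d 1 0).hom with hd1def
  have hd : d1 ∘ₗ d2 = 0 := by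
    apply LinearMap.ext; intro x
    exact congrArg (fun h => h.hom x) (Pc.d_comp_d 2 1 0)
  set ε : ↥(Pc.X 0) →ₗ[R] ↥C := (PR.π.f 0).hom with hεdef
  have hεs : Function.Surjective ε := by
    have : Epi (PR.π.f 0) := epi_of_isColimit_cofork PR.isColimitCokernelCofork
    exact (ModuleCat.epi_iff_surjective (PR.π.f 0)).mp this
  have hε0 : ∀ x : ↥(Pc.X 1), ε (d1 x) = 0 := by
    intro x
    have := congrArg (fun f => f.hom x) PR.complex_d_comp_π_f_zero
    exact this
  have hex : Function.Exact d1 ε := by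
    intro y
    constructor
    · intro hy
      obtain ⟨x, hx⟩ := (ShortComplex.moduleCat_exact_iff _).mp PR.exact₀ y hy
      exact ⟨x, hx⟩
    · rintro ⟨x, rfl⟩
      exact hε0 x
  -- projective module structures
  have hP0mod : Module.Projective R ↥(Pc.X 0) :=
    (IsProjective.iff_projective (R := R) (P := ↥(Pc.X 0))).mpr (hproj 0)
  have hP'mod : Module.Projective R ↥P' :=
    (IsProjective.iff_projective (R := R) (P := ↥P')).mpr hP'proj
  have hP''mod : Module.Projective R ↥P'' :=
    (IsProjective.iff_projective (R := R) (P := ↥P'')).mpr hP''proj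
  -- linear equivalences coming from the isos
  set eW' : ↥W' ≃ₗ[R] (↥C ⊗[R] ↥P') := e'.toLinearEquiv with heW'
  set eW'' : ↥W'' ≃ₗ[R] (↥C ⊗[R] ↥P'') := e''.toLinearEquiv with heW''
  -- exactness of the given short exact sequence
  haveI := hse.mono_f
  haveI := hse.epi_g
  have hfinj : Function.Injective f := (ModuleCat.mono_iff_injective f).mp hse.mono_f
  have hgsurj : Function.Surjective g := (ModuleCat.epi_iff_surjective g).mp hse.epi_g
  have hexfg : Function.Exact f.hom g.hom :=
    (ShortComplex.ShortExact.moduleCat_exact_iff_function_exact (ShortComplex.mk f g w)).mp hse.exact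
  -- the kernel of `g` is `C`-projective
  have hkerW' : (↥(LinearMap.ker g.hom)) ≃ₗ[R] ↥W' := by
    have hrange : LinearMap.ker g.hom = LinearMap.range f.hom :=
      LinearMap.exact_iff.mp hexfg
    exact ((LinearEquiv.ofInjective f.hom hfinj).trans
      (LinearEquiv.ofEq _ _ hrange.symm)).symm
  -- lifting property for C
  have hLiftC : CProjAux.Lift1 d2 d1 ↥C := CProjAux.lift1C C PR (hC.ext_vanish 1 one_pos)
  have hLiftKer : CProjAux.Lift1 d2 d1 ↥(LinearMap.ker g.hom) :=
    ((hLiftC.tensor hP'mod).of_equiv eW').of_equiv (hkerW'.trans (LinearEquiv.refl _ _)) |>.of_equiv (LinearEquiv.refl _ _)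
  -- every map `C → W''` lifts along `g`
  have hlift : ∀ φ : ↥C →ₗ[R] ↥W'', ∃ ψ : ↥C →ₗ[R] ↥W, g.hom ∘ₗ ψ = φ :=
    fun φ => CProjAux.key_lift hP0mod hd ε hεs hex _ hgsurj hLiftKer φ
  -- `W''` is a retract of `↥P'' →₀ ↥C`
  obtain ⟨σ, hσ⟩ := Module.projective_def.mp hP''mod
  set fsr := TensorProduct.finsuppScalarRight R R ↥C ↥P'' with hfsr
  set i'' : ↥W'' →ₗ[R] (↥P'' →₀ ↥C) :=
    fsr.toLinearMap ∘ₗ (LinearMap.lTensor ↥C σ) ∘ₗ eW''.toLinearMap with hi''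
  set r'' : (↥P'' →₀ ↥C) →ₗ[R] ↥W'' :=
    eW''.symm.toLinearMap ∘ₗ
      (LinearMap.lTensor ↥C (Finsupp.linearCombination R (id : ↥P'' → ↥P''))) ∘ₗ
      fsr.symm.toLinearMap with hr''
  have hri : ∀ x, r'' (i'' x) = x := by
    intro x
    simp only [hi'', hr'', LinearMap.comp_apply, LinearEquiv.coe_coe,
      LinearEquiv.symm_apply_apply]
    rw [← LinearMap.comp_apply, ← LinearMap.lTensor_comp]
    have h : Finsupp.linearCombination R (id : ↥P'' → ↥P'') ∘ₗ σ = LinearMap.id := by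
      apply LinearMap.ext; intro q; exact hσ q
    rw [h, LinearMap.lTensor_id, LinearMap.id_apply, LinearEquiv.symm_apply_apply]
  -- a section of `g`
  obtain ⟨s, hs⟩ := CProjAux.section_of_lift g.hom hlift i'' r'' hri
  -- the product decomposition
  have u : (↥W' × ↥W'') ≃ₗ[R] ↥W :=
    CProjAux.prodEquivOfSection f.hom g.hom hfinj hexfg s hs
  have final : ↥W ≃ₗ[R] (↥C ⊗[R] (↥P' × ↥P'')) :=
    u.symm.trans ((eW'.prodCongr eW'').trans (TensorProduct.prodRight R R ↥C ↥P' ↥P'').symm)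
  refine ⟨ModuleCat.of R (↥P' × ↥P''), ?_, ⟨final.toModuleIso⟩⟩
  exact (IsProjective.iff_projective (R := R) (P := ↥P' × ↥P'')).mp
    (CProjAux.projective_prod hP'mod hP''mod)
end
end

section
/- Let R be a commutative ring and C a semidualizing R-module. If 0 → W' → W → W'' → 0 is a short exact sequence of R-modules with W' and W'' both C-flat, then W is C-flat. -/
open CategoryTheory CategoryTheory.Limits TensorProduct

noncomputable section

variable (R : Type) [CommRing R]

section AuxHelpersForProof

variable {R : Type} [CommRing R]

open LinearMap


theorem lift_of_ker_le {L M T : Type} [AddCommGroup L] [AddCommGroup M] [AddCommGroup T]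
    [Module R L] [Module R M] [Module R T] (p : L →ₗ[R] M) (hp : Function.Surjective p)
    (h : L →ₗ[R] T) (hle : LinearMap.ker p ≤ LinearMap.ker h) : ∃ h' : M →ₗ[R] T, h' ∘ₗ p = h := by
  refine ⟨(LinearMap.ker p).liftQ h hle ∘ₗ (p.quotKerEquivOfSurjective hp).symm.toLinearMap, ?_⟩
  ext x
  have : (p.quotKerEquivOfSurjective hp).symm (p x) = Submodule.Quotient.mk x := by
    rw [LinearEquiv.symm_apply_eq]
    simp [LinearMap.quotKerEquivOfSurjective, LinearMap.quotKerEquivRange]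
  simp [this]

theorem factor_through_inj {X W' W : Type} [AddCommGroup X] [AddCommGroup W'] [AddCommGroup W]
    [Module R X] [Module R W'] [Module R W] (f : W' →ₗ[R] W) (hf : Function.Injective f)
    (v : X →ₗ[R] W) (hr : LinearMap.range v ≤ LinearMap.range f) :
    ∃ s : X →ₗ[R] W', f ∘ₗ s = v := by
  refine ⟨(LinearEquiv.ofInjective f hf).symm.toLinearMap ∘ₗ
    v.codRestrict (LinearMap.range f) (fun x => hr ⟨x, rfl⟩), ?_⟩
  ext x
  simp only [LinearMap.coe_comp, Function.comp_apply, LinearEquiv.coe_coe,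
    LinearMap.codRestrict_apply]
  have h2 := congrArg (Subtype.val)
    (LinearEquiv.apply_symm_apply (LinearEquiv.ofInjective f hf) ⟨v x, hr ⟨x, rfl⟩⟩)
  simpa [LinearEquiv.ofInjective_apply] using h2

theorem hom_left_exact {L1 L0 M T : Type} [AddCommGroup L1] [AddCommGroup L0] [AddCommGroup M]
    [AddCommGroup T] [Module R L1] [Module R L0] [Module R M] [Module R T]
    (d : L1 →ₗ[R] L0) (p : L0 →ₗ[R] M) (hp : Function.Surjective p)
    (hex : Function.Exact d p) :
    Function.Exact (lcomp R T p) (lcomp R T d) := by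
  intro h
  constructor
  · intro h0
    have hle : ker p ≤ ker h := by
      intro x hx
      obtain ⟨y, rfl⟩ := (hex x).mp hx
      exact congrFun (congrArg (fun (q : L1 →ₗ[R] T) => (q : L1 → T)) h0) y
    obtain ⟨h', hh'⟩ := lift_of_ker_le p hp h hle
    exact ⟨h', hh'⟩
  · rintro ⟨h', rfl⟩
    ext y
    simp [hex.apply_apply_eq_zero y]

theorem lcomp_injective {L0 M T : Type} [AddCommGroup L0] [AddCommGroup M]
    [AddCommGroup T] [Module R L0] [Module R M] [Module R T]
    (p : L0 →ₗ[R] M) (hp : Function.Surjective p) :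
    Function.Injective (lcomp R T p) := by
  intro a b hab
  ext m
  obtain ⟨x, rfl⟩ := hp m
  exact congrFun (congrArg (fun (q : L0 →ₗ[R] T) => (q : L0 → T)) hab) x

theorem eta_natural {V' V P Q : Type} [AddCommGroup V'] [AddCommGroup V] [AddCommGroup P]
    [AddCommGroup Q] [Module R V'] [Module R V] [Module R P] [Module R Q] (u : V' →ₗ[R] V) :
    (lcomp R (P ⊗[R] Q) u) ∘ₗ rTensorHomToHomRTensor (RingHom.id R) V P Q
      = rTensorHomToHomRTensor (RingHom.id R) V' P Q ∘ₗ rTensor Q (lcomp R P u) := by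
  apply TensorProduct.ext'
  intro f q; ext x; rfl


theorem eta_bij_free {M P Q : Type} [AddCommGroup M] [AddCommGroup P] [AddCommGroup Q]
    [Module R M] [Module R P] [Module R Q] [Module.Free R M] [Module.Finite R M] :
    Function.Bijective (rTensorHomToHomRTensor (RingHom.id R) M P Q) := by
  have : (rTensorHomToHomRTensor (RingHom.id R) M P Q : (M →ₗ[R] P) ⊗[R] Q → (M →ₗ[R] P ⊗[R] Q))
      = rTensorHomEquivHomRTensor R M P Q := by
    funext x; exact (rTensorHomEquivHomRTensor_apply x).symm
  rw [this]
  exact (rTensorHomEquivHomRTensor R M P Q).bijective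

theorem eta_bij_fp {M P Q : Type} [AddCommGroup M] [AddCommGroup P] [AddCommGroup Q]
    [Module R M] [Module R P] [Module R Q] [Module.FinitePresentation R M] [Module.Flat R Q] :
    Function.Bijective (rTensorHomToHomRTensor (RingHom.id R) M P Q) := by
  -- get a presentation
  obtain ⟨s, hs, hker⟩ := (inferInstance : Module.FinitePresentation R M)
  set p : (s →₀ R) →ₗ[R] M := Finsupp.linearCombination R ((↑) : s → M) with hp_def
  have hp : Function.Surjective p := by
    rw [← LinearMap.range_eq_top, Finsupp.range_linearCombination]
    simpa [Subtype.range_coe_subtype, Finset.setOf_mem] using hs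
  obtain ⟨t, ht⟩ := hker
  set d : (t →₀ R) →ₗ[R] (s →₀ R) := Finsupp.linearCombination R ((↑) : t → (s →₀ R)) with hd_def
  have hrange_d : LinearMap.range d = LinearMap.ker p := by
    rw [Finsupp.range_linearCombination]
    rw [← ht]
    congr 1
    simp [Subtype.range_coe_subtype, Finset.setOf_mem]
  have hex : Function.Exact d p := LinearMap.exact_iff.mpr hrange_d.symm
  have hη0 : Function.Bijective (rTensorHomToHomRTensor (RingHom.id R) (s →₀ R) P Q) := eta_bij_free
  have hη1 : Function.Bijective (rTensorHomToHomRTensor (RingHom.id R) (t →₀ R) P Q) := eta_bij_free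
  have htop_inj : Function.Injective (rTensor Q (lcomp R P p)) :=
    Module.Flat.rTensor_preserves_injective_linearMap _ (lcomp_injective p hp)
  have htop_exact : Function.Exact (rTensor Q (lcomp R P p)) (rTensor Q (lcomp R P d)) :=
    Module.Flat.rTensor_exact Q (hom_left_exact d p hp hex)
  have hbot_inj : Function.Injective (lcomp R (P ⊗[R] Q) p) := lcomp_injective p hp
  have hbot_exact := hom_left_exact (T := P ⊗[R] Q) d p hp hex
  have nat_p := eta_natural (P := P) (Q := Q) p
  have nat_d := eta_natural (P := P) (Q := Q) d
  constructor
  · have key : Function.Injective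
        ⇑(lcomp R (P ⊗[R] Q) p ∘ₗ rTensorHomToHomRTensor (RingHom.id R) M P Q) := by
      rw [nat_p, LinearMap.coe_comp]
      exact hη0.injective.comp htop_inj
    rw [LinearMap.coe_comp] at key
    exact key.of_comp
  · intro b
    obtain ⟨a₀, ha₀⟩ := hη0.surjective (lcomp R (P ⊗[R] Q) p b)
    have hzero : rTensor Q (lcomp R P d) a₀ = 0 := by
      apply hη1.injective
      have := congrFun (congrArg (fun (q : _ →ₗ[R] _) => ⇑q) nat_d) a₀
      simp only [LinearMap.coe_comp, Function.comp_apply] at this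
      rw [map_zero, ← this, ha₀]
      ext y
      simp [hex.apply_apply_eq_zero]
    obtain ⟨a, ha⟩ := (htop_exact _).mp hzero
    refine ⟨a, hbot_inj ?_⟩
    have := congrFun (congrArg (fun (q : _ →ₗ[R] _) => ⇑q) nat_p) a
    simp only [LinearMap.coe_comp, Function.comp_apply] at this
    rw [this, ha, ha₀]

theorem flat_of_extension {A B D : Type} [AddCommGroup A] [AddCommGroup B] [AddCommGroup D]
    [Module R A] [Module R B] [Module R D] [Module.Flat R A] [Module.Flat R D]
    (f : A →ₗ[R] B) (g : B →ₗ[R] D) (hf : Function.Injective f) (hg : Function.Surjective g)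
    (hex : Function.Exact f g) : Module.Flat R B := by
  rw [Module.Flat.iff_rTensor_injective']
  intro I
  rw [injective_iff_map_eq_zero]
  intro x hx
  have hD : lTensor (↥I) g x = 0 := by
    apply ((Module.Flat.iff_rTensor_injective' (R := R) (M := D)).mp inferInstance I)
    rw [map_zero]
    have : rTensor D I.subtype ∘ₗ lTensor (↥I) g = lTensor R g ∘ₗ rTensor B I.subtype := by
      rw [rTensor_comp_lTensor, lTensor_comp_rTensor]
    have h2 := congrFun (congrArg (fun (q : _ →ₗ[R] _) => ⇑q) this) x
    simp only [LinearMap.coe_comp, Function.comp_apply] at h2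
    rw [h2, hx, map_zero]
  obtain ⟨y, rfl⟩ := (lTensor_exact (↥I) hex hg x).mp hD
  have hAzero : rTensor A I.subtype y = 0 := by
    have : Function.Injective (lTensor R f) :=
      Module.Flat.lTensor_preserves_injective_linearMap f hf
    apply this
    rw [map_zero]
    have hcomm : lTensor R f ∘ₗ rTensor A I.subtype = rTensor B I.subtype ∘ₗ lTensor (↥I) f := by
      rw [rTensor_comp_lTensor, lTensor_comp_rTensor]
    have h2 := congrFun (congrArg (fun (q : _ →ₗ[R] _) => ⇑q) hcomm) y
    simp only [LinearMap.coe_comp, Function.comp_apply] at h2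
    rw [h2, hx]
  have := ((Module.Flat.iff_rTensor_injective' (R := R) (M := A)).mp inferInstance I)
  rw [injective_iff_map_eq_zero] at this
  rw [this y hAzero, map_zero]

theorem extC {Q0 Q1 Q2 Cm F : Type} [AddCommGroup Q0] [AddCommGroup Q1] [AddCommGroup Q2]
    [AddCommGroup Cm] [AddCommGroup F] [Module R Q0] [Module R Q1] [Module R Q2]
    [Module R Cm] [Module R F] [Module.FinitePresentation R Q0] [Module.FinitePresentation R Q1]
    [Module.FinitePresentation R Q2] [Module.Flat R F]
    (d2 : Q2 →ₗ[R] Q1) (d1 : Q1 →ₗ[R] Q0)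
    (hExt : Function.Exact (lcomp R Cm d1) (lcomp R Cm d2))
    (s : Q1 →ₗ[R] Cm ⊗[R] F) (hs : s ∘ₗ d2 = 0) :
    ∃ k : Q0 →ₗ[R] Cm ⊗[R] F, k ∘ₗ d1 = s := by
  have hη1 : Function.Bijective (rTensorHomToHomRTensor (RingHom.id R) Q1 Cm F) := eta_bij_fp
  have hη2 : Function.Bijective (rTensorHomToHomRTensor (RingHom.id R) Q2 Cm F) := eta_bij_fp
  have hmid : Function.Exact (rTensor F (lcomp R Cm d1)) (rTensor F (lcomp R Cm d2)) :=
    Module.Flat.rTensor_exact F hExt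
  obtain ⟨x, hx⟩ := hη1.surjective s
  have hx2 : rTensor F (lcomp R Cm d2) x = 0 := by
    apply hη2.injective
    have hnat := congrFun (congrArg (fun (q : _ →ₗ[R] _) => ⇑q)
      (eta_natural (R := R) (P := Cm) (Q := F) d2)) x
    simp only [LinearMap.coe_comp, Function.comp_apply] at hnat
    rw [map_zero, ← hnat, hx]
    exact hs
  obtain ⟨y, hy⟩ := (hmid x).mp hx2
  refine ⟨rTensorHomToHomRTensor (RingHom.id R) Q0 Cm F y, ?_⟩
  have hnat := congrFun (congrArg (fun (q : _ →ₗ[R] _) => ⇑q)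
    (eta_natural (R := R) (P := Cm) (Q := F) d1)) y
  simp only [LinearMap.coe_comp, Function.comp_apply] at hnat
  show lcomp R (Cm ⊗[R] F) d1 (rTensorHomToHomRTensor (RingHom.id R) Q0 Cm F y) = s
  rw [hnat, hy, hx]

/-- evaluation map -/
noncomputable def muMap (Cm V : Type) [AddCommGroup Cm] [AddCommGroup V] [Module R Cm]
    [Module R V] : Cm ⊗[R] (Cm →ₗ[R] V) →ₗ[R] V :=
  TensorProduct.lift (LinearMap.id : (Cm →ₗ[R] V) →ₗ[R] (Cm →ₗ[R] V)).flip

@[simp] theorem muMap_tmul {Cm V : Type} [AddCommGroup Cm] [AddCommGroup V] [Module R Cm]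
    [Module R V] (c : Cm) (ψ : Cm →ₗ[R] V) : muMap (R := R) Cm V (c ⊗ₜ ψ) = ψ c := rfl

theorem muMap_bij_CF {Cm F : Type} [AddCommGroup Cm] [AddCommGroup F] [Module R Cm]
    [Module R F] [Module.FinitePresentation R Cm] [Module.Flat R F]
    (hσ : Function.Bijective (toSpanSingleton R (Cm →ₗ[R] Cm) LinearMap.id)) :
    Function.Bijective (muMap (R := R) Cm (Cm ⊗[R] F)) := by
  set σ := LinearEquiv.ofBijective _ hσ with hσdef
  have hη : Function.Bijective (rTensorHomToHomRTensor (RingHom.id R) Cm Cm F) := eta_bij_fp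
  set η := LinearEquiv.ofBijective _ hη with hηdef
  set L := TensorProduct.congr (LinearEquiv.refl R Cm) η with hLdef
  set A := TensorProduct.congr (LinearEquiv.refl R Cm)
    (TensorProduct.congr σ.symm (LinearEquiv.refl R F)) with hAdef
  set B := TensorProduct.congr (LinearEquiv.refl R Cm) (TensorProduct.lid R F) with hBdef
  have key : muMap (R := R) Cm (Cm ⊗[R] F) ∘ₗ L.toLinearMap
      = B.toLinearMap ∘ₗ A.toLinearMap := by
    apply TensorProduct.ext'
    intro c y
    induction y using TensorProduct.induction_on with
    | zero => simp
    | add a b ha hb => simp only [tmul_add, map_add, ha, hb]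
    | tmul h x =>
      simp only [LinearMap.coe_comp, Function.comp_apply, LinearEquiv.coe_coe, hLdef, hAdef, hBdef,
        TensorProduct.congr_tmul, LinearEquiv.refl_apply, TensorProduct.lid_tmul]
      have h1 : η (h ⊗ₜ x) = rTensorHomToHomRTensor (RingHom.id R) Cm Cm F (h ⊗ₜ x) := rfl
      rw [h1]
      have h2 : muMap (R := R) Cm (Cm ⊗[R] F) (c ⊗ₜ rTensorHomToHomRTensor (RingHom.id R) Cm Cm F (h ⊗ₜ x))
          = h c ⊗ₜ x := rfl
      rw [h2]
      have hh : (σ.symm h) • (LinearMap.id : Cm →ₗ[R] Cm) = h := σ.apply_symm_apply h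
      conv_lhs => rw [← hh]
      show (σ.symm h • (LinearMap.id : Cm →ₗ[R] Cm)) c ⊗ₜ[R] x = c ⊗ₜ[R] (σ.symm h • x)
      rw [LinearMap.smul_apply, LinearMap.id_coe, id_eq, smul_tmul]
  have hkey : ∀ z, muMap (R := R) Cm (Cm ⊗[R] F) z = B (A (L.symm z)) := by
    intro z
    have h1 := congrFun (congrArg (fun (q : _ →ₗ[R] _) => ⇑q) key) (L.symm z)
    simp only [LinearMap.coe_comp, Function.comp_apply, LinearEquiv.coe_coe,
      LinearEquiv.apply_symm_apply] at h1
    simpa using h1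
  have : ⇑(muMap (R := R) Cm (Cm ⊗[R] F)) = ⇑B ∘ ⇑A ∘ ⇑L.symm := by
    funext z; exact hkey z
  rw [this]
  exact B.bijective.comp (A.bijective.comp L.symm.bijective)

theorem muMap_bij_of_equiv {Cm F V : Type} [AddCommGroup Cm] [AddCommGroup F] [AddCommGroup V]
    [Module R Cm] [Module R F] [Module R V] [Module.FinitePresentation R Cm] [Module.Flat R F]
    (hσ : Function.Bijective (toSpanSingleton R (Cm →ₗ[R] Cm) LinearMap.id))
    (e : V ≃ₗ[R] Cm ⊗[R] F) : Function.Bijective (muMap (R := R) Cm V) := by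
  set Ea := ((LinearEquiv.refl R Cm).arrowCongr e :
    (Cm →ₗ[R] V) ≃ₗ[R] (Cm →ₗ[R] Cm ⊗[R] F)) with hEa
  set Lb := TensorProduct.congr (LinearEquiv.refl R Cm) Ea with hLb
  have key : e.toLinearMap ∘ₗ muMap (R := R) Cm V
      = muMap (R := R) Cm (Cm ⊗[R] F) ∘ₗ Lb.toLinearMap := by
    apply TensorProduct.ext'
    intro c ψ
    simp [hLb, hEa, LinearEquiv.arrowCongr_apply]
  have hkey : ∀ z, muMap (R := R) Cm V z = e.symm (muMap (R := R) Cm (Cm ⊗[R] F) (Lb z)) := by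
    intro z
    have h1 := congrFun (congrArg (fun (q : _ →ₗ[R] _) => ⇑q) key) z
    simp only [LinearMap.coe_comp, Function.comp_apply, LinearEquiv.coe_coe] at h1
    rw [← h1, LinearEquiv.symm_apply_apply]
  have : ⇑(muMap (R := R) Cm V) = ⇑e.symm ∘ ⇑(muMap (R := R) Cm (Cm ⊗[R] F)) ∘ ⇑Lb := by
    funext z; exact hkey z
  rw [this]
  exact e.symm.bijective.comp ((muMap_bij_CF hσ).comp Lb.bijective)

end AuxHelpersForProof

open LinearMap in
theorem semidualizing_data (C : ModuleCat.{0} R) (hC : IsSemidualizing R C) :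
    ∃ (Q0 Q1 Q2 : ModuleCat.{0} R) (d2 : ↥Q2 →ₗ[R] ↥Q1) (d1 : ↥Q1 →ₗ[R] ↥Q0)
      (ε : ↥Q0 →ₗ[R] ↥C),
      Module.FinitePresentation R ↥Q0 ∧ Module.FinitePresentation R ↥Q1 ∧
      Module.FinitePresentation R ↥Q2 ∧ Module.Projective R ↥Q0 ∧ Function.Surjective ε ∧
      Function.Exact d1 ε ∧ d1 ∘ₗ d2 = 0 ∧
      Function.Exact (lcomp R ↥C d1) (lcomp R ↥C d2) := by
  obtain ⟨P, π, hproj, hfin, hqis⟩ := hC.resolution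
  haveI := hproj
  haveI := hfin
  let pr : ProjectiveResolution C :=
    { complex := P, projective := hproj, π := π, quasiIso := hqis }
  haveI : ∀ n, Module.Projective R ↥(P.X n) := fun n =>
    (IsProjective.iff_projective _).mpr (hproj n)
  haveI : ∀ n, Module.FinitePresentation R ↥(P.X n) := fun n =>
    Module.finitePresentation_of_projective R _
  have hεsurj : Function.Surjective (π.f 0) := by
    haveI : Epi (pr.π.f 0) := CategoryTheory.Limits.epi_of_isColimit_cofork pr.isColimitCokernelCofork
    exact (ModuleCat.epi_iff_surjective (pr.π.f 0)).mp inferInstance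
  have hexact0 : (ShortComplex.mk (P.d 1 0) (π.f 0) pr.complex_d_comp_π_f_zero).Exact :=
    ShortComplex.exact_of_g_is_cokernel _ pr.isColimitCokernelCofork
  have hrk := hexact0.moduleCat_range_eq_ker
  refine ⟨P.X 0, P.X 1, P.X 2, (P.d 2 1).hom, (P.d 1 0).hom, (π.f 0).hom, inferInstance, inferInstance,
    inferInstance, inferInstance, hεsurj, (LinearMap.exact_iff (f := (P.d 1 0).hom) (g := (π.f 0).hom)).mpr hrk.symm, ?_, ?_⟩
  · rw [← ModuleCat.hom_comp, P.d_comp_d, ModuleCat.hom_zero]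
  · -- Ext part
    have hsub : Subsingleton ↥((P.linearYonedaObj R C).homology 1) := by
      have h1 := hC.ext_vanish 1 one_pos
      exact Equiv.subsingleton.symm (pr.isoExt 1 C).toLinearEquiv.toEquiv
    have hEx : (P.linearYonedaObj R C).ExactAt 1 :=
      ((P.linearYonedaObj R C).exactAt_iff_isZero_homology 1).mpr
        (ModuleCat.isZero_of_subsingleton _)
    have h12 : ((P.linearYonedaObj R C).sc' 0 1 2).Exact :=
      (HomologicalComplex.exactAt_iff' _ 0 1 2 (by simp) (by simp)).mp hEx
    rw [ShortComplex.moduleCat_exact_iff] at h12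
    intro s
    constructor
    · intro hs
      obtain ⟨k, hk⟩ := h12 (ModuleCat.ofHom s) (by
        change P.d 2 1 ≫ ModuleCat.ofHom s = 0
        ext x
        exact congrArg (fun q : _ →ₗ[R] _ => q x) hs)
      exact ⟨k.hom, congrArg ModuleCat.Hom.hom hk⟩
    · rintro ⟨k, rfl⟩
      show (lcomp R ↥C (P.d 2 1).hom) ((lcomp R ↥C (P.d 1 0).hom) k) = 0
      ext x
      show k ((P.d 1 0) ((P.d 2 1) x)) = 0
      have : (P.d 2 1 ≫ P.d 1 0) x = (0 : ↥(P.X 2) →ₗ[R] ↥(P.X 0)) x := by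
        rw [P.d_comp_d 2 1 0]; rfl
      show k ((P.d 2 1 ≫ P.d 1 0) x) = 0
      rw [this]
      simp


open LinearMap in
/-- If `0 → W' → W → W'' → 0` is a short exact sequence of `R`-modules with
`W'` and `W''` both `C`-flat, then `W` is `C`-flat. -/
theorem cFlat_of_shortExact (C : ModuleCat.{0} R) (hC : IsSemidualizing R C)
    (W' W W'' : ModuleCat.{0} R) (f : W' ⟶ W) (g : W ⟶ W'') (w : f ≫ g = 0)
    (hse : (ShortComplex.mk f g w).ShortExact)
    (h' : IsCFlat R C W') (h'' : IsCFlat R C W'') : IsCFlat R C W := by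
  classical
  obtain ⟨F', hF', ⟨e'⟩⟩ := h'
  obtain ⟨F'', hF'', ⟨e''⟩⟩ := h''
  haveI : Module.Flat R ↥F' := hF'
  haveI : Module.Flat R ↥F'' := hF''
  haveI := hse.mono_f
  haveI := hse.epi_g
  have hfinj : Function.Injective f := (ModuleCat.mono_iff_injective f).mp inferInstance
  have hgsurj : Function.Surjective g := (ModuleCat.epi_iff_surjective g).mp inferInstance
  have hrk : LinearMap.range f.hom = LinearMap.ker g.hom := hse.exact.moduleCat_range_eq_ker
  have hfg : Function.Exact f.hom g.hom :=
    LinearMap.exact_iff.mpr hrk.symm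
  obtain ⟨Q0, Q1, Q2, d2, d1, ε, hQ0, hQ1, hQ2, hQ0proj, hεsurj, hd1ε, hd12, hExt⟩ :=
    semidualizing_data R C hC
  haveI := hQ0; haveI := hQ1; haveI := hQ2
  have hCfp : Module.FinitePresentation R ↥C := by
    apply Module.finitePresentation_of_surjective ε hεsurj
    have hker : LinearMap.ker ε = LinearMap.range d1 := LinearMap.exact_iff.mp hd1ε
    rw [hker, LinearMap.range_eq_map]
    exact Submodule.FG.map d1 (Module.finite_def.mp inferInstance)
  haveI := hCfp
  have hσ : Function.Bijective (toSpanSingleton R (↥C →ₗ[R] ↥C) LinearMap.id) := hC.homothety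
  -- Step 1 : postcomposition with g is surjective on Hom(C, -)
  have step1 : ∀ φ : ↥C →ₗ[R] ↥W'', ∃ ψ : ↥C →ₗ[R] ↥W, g.hom ∘ₗ ψ = φ := by
    intro φ
    obtain ⟨u, hu⟩ := Module.projective_lifting_property g.hom
      (φ ∘ₗ ε) hgsurj
    have hud1 : ∀ y, g (u (d1 y)) = 0 := by
      intro y
      have h1 : g (u (d1 y)) = φ (ε (d1 y)) := congrFun (congrArg (fun q : _ →ₗ[R] _ => ⇑q) hu)
        (d1 y)
      rw [h1, hd1ε.apply_apply_eq_zero y, map_zero]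
    have hrange : LinearMap.range (u ∘ₗ d1) ≤ LinearMap.range f.hom := by
      rintro _ ⟨y, rfl⟩
      rw [hrk]
      exact LinearMap.mem_ker.mpr (hud1 y)
    obtain ⟨s, hsdef⟩ := factor_through_inj f.hom hfinj (u ∘ₗ d1) hrange
    set s' : ↥Q1 →ₗ[R] ↥C ⊗[R] ↥F' := e'.toLinearEquiv.toLinearMap ∘ₗ s with hs'def
    have hs2 : s ∘ₗ d2 = 0 := by
      ext x
      apply hfinj
      have h1 : f (s (d2 x)) = u (d1 (d2 x)) :=
        congrFun (congrArg (fun q : _ →ₗ[R] _ => ⇑q) hsdef) (d2 x)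
      have h2 : d1 (d2 x) = 0 := congrFun (congrArg (fun q : _ →ₗ[R] _ => ⇑q) hd12) x
      simp [h1, h2]
    have hs' : s' ∘ₗ d2 = 0 := by
      rw [hs'def, LinearMap.comp_assoc, hs2, LinearMap.comp_zero]
    obtain ⟨k', hk'⟩ := extC d2 d1 hExt s' hs'
    set k : ↥Q0 →ₗ[R] ↥W' := e'.toLinearEquiv.symm.toLinearMap ∘ₗ k' with hkdef
    have hkd1 : k ∘ₗ d1 = s := by
      rw [hkdef, LinearMap.comp_assoc, hk', hs'def]
      ext x
      rw [LinearMap.comp_apply]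
      exact e'.toLinearEquiv.symm_apply_apply (s x)
    have hker_le : LinearMap.ker ε ≤ LinearMap.ker (u - f.hom ∘ₗ k) := by
      intro x hx
      have hx' : x ∈ LinearMap.range d1 := by
        rw [← LinearMap.exact_iff.mp hd1ε]; exact hx
      obtain ⟨y, rfl⟩ := hx'
      have h1 : k (d1 y) = s y := congrFun (congrArg (fun q : _ →ₗ[R] _ => ⇑q) hkd1) y
      have h2 : f (s y) = u (d1 y) := congrFun (congrArg (fun q : _ →ₗ[R] _ => ⇑q) hsdef) y
      simp [LinearMap.mem_ker, h1, h2]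
    obtain ⟨ψ, hψ⟩ := lift_of_ker_le ε hεsurj (u - f.hom ∘ₗ k) hker_le
    refine ⟨ψ, ?_⟩
    ext c
    obtain ⟨x, rfl⟩ := hεsurj c
    have h1 : ψ (ε x) = u x - f (k x) := congrFun (congrArg (fun q : _ →ₗ[R] _ => ⇑q) hψ) x
    have h2 : g (u x) = φ (ε x) := congrFun (congrArg (fun q : _ →ₗ[R] _ => ⇑q) hu) x
    have h3 : g (f (k x)) = 0 := hfg.apply_apply_eq_zero (k x)
    simp only [LinearMap.coe_comp, Function.comp_apply, h1, map_sub, h2, h3, sub_zero]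
  -- Step 2 : Hom(C, W) is flat
  set H' : Type := ↥C →ₗ[R] ↥W' with hH'def
  set H : Type := ↥C →ₗ[R] ↥W with hHdef
  set H'' : Type := ↥C →ₗ[R] ↥W'' with hH''def
  set fH : H' →ₗ[R] H := llcomp R ↥C ↥W' ↥W f.hom with hfHdef
  set gH : H →ₗ[R] H'' := llcomp R ↥C ↥W ↥W'' g.hom with hgHdef
  have hfH_inj : Function.Injective fH := by
    intro a b hab
    ext c
    exact hfinj (congrFun (congrArg (fun q : _ →ₗ[R] _ => ⇑q) hab) c)
  have hgH_surj : Function.Surjective gH := by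
    intro φ
    obtain ⟨ψ, hψ⟩ := step1 φ
    exact ⟨ψ, hψ⟩
  have hexH : Function.Exact fH gH := by
    intro ψ
    constructor
    · intro h0
      have hr : LinearMap.range ψ ≤ LinearMap.range f.hom := by
        rintro _ ⟨c, rfl⟩
        rw [hrk]
        exact LinearMap.mem_ker.mpr (congrFun (congrArg (fun q : _ →ₗ[R] _ => ⇑q) h0) c)
      obtain ⟨s, hs⟩ := factor_through_inj f.hom hfinj ψ hr
      exact ⟨s, hs⟩
    · rintro ⟨χ, rfl⟩
      ext c
      exact hfg.apply_apply_eq_zero (χ c)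
  have hηC' : Function.Bijective (rTensorHomToHomRTensor (RingHom.id R) ↥C ↥C ↥F') := eta_bij_fp
  have hηC'' : Function.Bijective (rTensorHomToHomRTensor (RingHom.id R) ↥C ↥C ↥F'') := eta_bij_fp
  have flatH' : Module.Flat R H' := by
    refine Module.Flat.of_linearEquiv (M := ↥F') (N := H') ?_
    exact ((LinearEquiv.refl R ↥C).arrowCongr e'.toLinearEquiv) ≪≫ₗ
      (LinearEquiv.ofBijective _ hηC').symm ≪≫ₗ
      TensorProduct.congr (LinearEquiv.ofBijective _ hσ).symm (LinearEquiv.refl R ↥F') ≪≫ₗ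
      TensorProduct.lid R ↥F'
  have flatH'' : Module.Flat R H'' := by
    refine Module.Flat.of_linearEquiv (M := ↥F'') (N := H'') ?_
    exact ((LinearEquiv.refl R ↥C).arrowCongr e''.toLinearEquiv) ≪≫ₗ
      (LinearEquiv.ofBijective _ hηC'').symm ≪≫ₗ
      TensorProduct.congr (LinearEquiv.ofBijective _ hσ).symm (LinearEquiv.refl R ↥F'') ≪≫ₗ
      TensorProduct.lid R ↥F''
  haveI := flatH'
  haveI := flatH''
  have flatH : Module.Flat R H := flat_of_extension fH gH hfH_inj hgH_surj hexH
  -- Step 3 : the evaluation map C ⊗ Hom(C, W) → W is bijective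
  have hμ' : Function.Bijective (muMap (R := R) ↥C ↥W') :=
    muMap_bij_of_equiv hσ e'.toLinearEquiv
  have hμ'' : Function.Bijective (muMap (R := R) ↥C ↥W'') :=
    muMap_bij_of_equiv hσ e''.toLinearEquiv
  set a : ↥C ⊗[R] H' →ₗ[R] ↥C ⊗[R] H := lTensor ↥C fH with hadef
  set b : ↥C ⊗[R] H →ₗ[R] ↥C ⊗[R] H'' := lTensor ↥C gH with hbdef
  have hexrow : Function.Exact a b := lTensor_exact ↥C hexH hgH_surj
  have hbsurj : Function.Surjective b := LinearMap.lTensor_surjective ↥C hgH_surj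
  have sq1 : ∀ z, muMap (R := R) ↥C ↥W (a z) = f (muMap (R := R) ↥C ↥W' z) := by
    intro z
    induction z using TensorProduct.induction_on with
    | zero => simp
    | add p q hp hq => simp [map_add, hp, hq]
    | tmul c ψ => rfl
  have sq2 : ∀ z, muMap (R := R) ↥C ↥W'' (b z) = g (muMap (R := R) ↥C ↥W z) := by
    intro z
    induction z using TensorProduct.induction_on with
    | zero => simp
    | add p q hp hq => simp [map_add, hp, hq]
    | tmul c ψ => rfl
  have hμ : Function.Bijective (muMap (R := R) ↥C ↥W) := by
    constructor
    · rw [injective_iff_map_eq_zero]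
      intro x hx
      have h1 : b x = 0 := by
        apply hμ''.injective
        rw [sq2 x, hx, map_zero, map_zero]
      obtain ⟨y, hy⟩ := (hexrow x).mp h1
      have h2 : f (muMap (R := R) ↥C ↥W' y) = 0 := by rw [← sq1, hy, hx]
      have h3 : muMap (R := R) ↥C ↥W' y = 0 := by
        apply hfinj
        rw [h2, map_zero]
      have h4 : y = 0 := by
        apply hμ'.injective
        rw [h3, map_zero]
      rw [← hy, h4, map_zero]
    · intro wv
      obtain ⟨t, ht⟩ := hμ''.surjective (g wv)
      obtain ⟨u, rfl⟩ := hbsurj t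
      have h1 : g (wv - muMap (R := R) ↥C ↥W u) = 0 := by
        rw [map_sub, ← sq2, ht, sub_self]
      have h2 : wv - muMap (R := R) ↥C ↥W u ∈ LinearMap.range f.hom := by
        rw [hrk]
        exact LinearMap.mem_ker.mpr h1
      obtain ⟨z, hz⟩ := h2
      obtain ⟨v, hv⟩ := hμ'.surjective z
      refine ⟨u + a v, ?_⟩
      rw [map_add, sq1 v, hv, hz, add_sub_cancel]
  refine ⟨ModuleCat.of R H, flatH, ⟨?_⟩⟩
  exact Iso.refl _ ≪≫ (LinearEquiv.ofBijective _ hμ).symm.toModuleIso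

end
end

section
/- If X is a C-projective complex (an exact complex all of whose cycles are C-projective modules), then the total Hom-complex 𝓗om(X, H) is exact for every C-flat complex H. -/
open CategoryTheory CategoryTheory.Limits TensorProduct

noncomputable section

variable (R : Type) [CommRing R]

section AuxProof
variable {R}
section tau
variable (P Q : Type) [AddCommGroup P] [Module R P] [AddCommGroup Q] [Module R Q]

/-- Naturality of `rTensorHomToHomRTensor` in the first variable. -/
lemma tau_nat {M M' : Type} [AddCommGroup M] [Module R M] [AddCommGroup M'] [Module R M']
    (u : M' →ₗ[R] M) :
    (rTensorHomToHomRTensor (RingHom.id R) M' P Q) ∘ₗ (LinearMap.rTensor Q (LinearMap.lcomp R P u))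
      = (LinearMap.lcomp R (P ⊗[R] Q) u) ∘ₗ (rTensorHomToHomRTensor (RingHom.id R) M P Q) := by
  apply TensorProduct.ext'
  intro f q
  ext m'
  simp [rTensorHomToHomRTensor_apply]

lemma tau_bij (M : Type) [AddCommGroup M] [Module R M]
    [Module.Finite R M] [Module.Projective R M] :
    Function.Bijective (rTensorHomToHomRTensor (RingHom.id R) M P Q) := by
  obtain ⟨n, r, hr⟩ := Module.Finite.exists_fin' R M
  obtain ⟨s, hs⟩ := Module.projective_lifting_property r LinearMap.id hr
  have free_bij : Function.Bijective (rTensorHomToHomRTensor (RingHom.id R) (Fin n → R) P Q) := by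
    rw [← rTensorHomEquivHomRTensor_toLinearMap]
    exact (rTensorHomEquivHomRTensor R (Fin n → R) P Q).bijective
  have key : ∀ (x : (M →ₗ[R] P) ⊗[R] Q),
      LinearMap.rTensor Q (LinearMap.lcomp R P s) (LinearMap.rTensor Q (LinearMap.lcomp R P r) x)
        = x := by
    intro x
    rw [← LinearMap.rTensor_comp_apply]
    have : (LinearMap.lcomp R P s) ∘ₗ (LinearMap.lcomp R P r) = LinearMap.id := by
      ext φ m
      simp only [LinearMap.coe_comp, Function.comp_apply, LinearMap.lcomp_apply,
        LinearMap.id_coe, id_eq]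
      rw [show r (s m) = (r ∘ₗ s) m from rfl, hs]
      rfl
    rw [this, LinearMap.rTensor_id, LinearMap.id_apply]
  constructor
  · intro x y hxy
    have h1 : rTensorHomToHomRTensor (RingHom.id R) (Fin n → R) P Q
        (LinearMap.rTensor Q (LinearMap.lcomp R P r) x) =
        rTensorHomToHomRTensor (RingHom.id R) (Fin n → R) P Q
        (LinearMap.rTensor Q (LinearMap.lcomp R P r) y) := by
      have h0 := congrFun (congrArg DFunLike.coe (tau_nat P Q r)) x
      have h0' := congrFun (congrArg DFunLike.coe (tau_nat P Q r)) y
      simp only [LinearMap.coe_comp, Function.comp_apply] at h0 h0'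
      rw [h0, h0', hxy]
    have := free_bij.injective h1
    calc x = _ := (key x).symm
    _ = _ := by rw [this]
    _ = y := key y
  · intro y
    obtain ⟨z, hz⟩ := free_bij.surjective ((LinearMap.lcomp R (P ⊗[R] Q) r) y)
    refine ⟨LinearMap.rTensor Q (LinearMap.lcomp R P s) z, ?_⟩
    have h2 := congrFun (congrArg DFunLike.coe (tau_nat P Q s)) z
    simp only [LinearMap.coe_comp, Function.comp_apply] at h2
    rw [h2, hz]
    ext m
    simp only [LinearMap.lcomp_apply]
    rw [show r (s m) = (r ∘ₗ s) m from rfl, hs]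
    rfl
end tau

/-- Core: lifting maps from `C'` along surjections with `C`-flat kernel. -/
lemma ext1_lift (C' : Type) [AddCommGroup C'] [Module R C']
    (P0 P1 P2 : Type) [AddCommGroup P0] [Module R P0] [AddCommGroup P1] [Module R P1]
    [AddCommGroup P2] [Module R P2]
    [Module.Projective R P0] [Module.Finite R P1] [Module.Projective R P1]
    [Module.Finite R P2] [Module.Projective R P2]
    (d1 : P1 →ₗ[R] P0) (d2 : P2 →ₗ[R] P1) (p : P0 →ₗ[R] C')
    (hp : Function.Surjective p) (hpd1 : p ∘ₗ d1 = 0) (hd12 : d1 ∘ₗ d2 = 0)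
    (hker : ∀ x, p x = 0 → ∃ y, d1 y = x)
    (hext : ∀ φ : P1 →ₗ[R] C', φ ∘ₗ d2 = 0 → ∃ ψ : P0 →ₗ[R] C', φ = ψ ∘ₗ d1)
    (F : Type) [AddCommGroup F] [Module R F] [Module.Flat R F]
    (E M : Type) [AddCommGroup E] [Module R E] [AddCommGroup M] [Module R M]
    (q : E →ₗ[R] M) (hq : Function.Surjective q)
    (e : (LinearMap.ker q) ≃ₗ[R] (C' ⊗[R] F)) (f : C' →ₗ[R] M) :
    ∃ g : C' →ₗ[R] E, q ∘ₗ g = f := by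
  classical
  -- lift f ∘ p through q
  obtain ⟨g0, hg0⟩ := Module.projective_lifting_property q (f ∘ₗ p) hq
  -- g0 ∘ d1 lands in ker q
  have hmem : ∀ x : P1, g0 (d1 x) ∈ LinearMap.ker q := by
    intro x
    have : q (g0 (d1 x)) = f (p (d1 x)) := congrFun (congrArg DFunLike.coe hg0) (d1 x)
    simp only [LinearMap.mem_ker, this]
    rw [show p (d1 x) = (p ∘ₗ d1) x from rfl, hpd1]
    simp
  let g1 : P1 →ₗ[R] LinearMap.ker q := LinearMap.codRestrict _ (g0 ∘ₗ d1) hmem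
  let ee : P1 →ₗ[R] C' ⊗[R] F := e.toLinearMap ∘ₗ g1
  have hee2 : ee ∘ₗ d2 = 0 := by
    ext x
    simp only [LinearMap.coe_comp, Function.comp_apply, LinearMap.zero_apply, ee, g1]
    have : (LinearMap.codRestrict (LinearMap.ker q) (g0 ∘ₗ d1) hmem) (d2 x) = 0 := by
      apply Subtype.ext
      simp only [LinearMap.codRestrict_apply, LinearMap.coe_comp, Function.comp_apply]
      rw [show d1 (d2 x) = (d1 ∘ₗ d2) x from rfl, hd12]
      simp
    rw [this, map_zero]
  -- pull back through τ₁
  obtain ⟨z, hz⟩ := (tau_bij C' F P1).surjective ee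
  -- z is killed by (lcomp d2) ⊗ F
  have hz2 : LinearMap.rTensor F (LinearMap.lcomp R C' d2) z = 0 := by
    apply (tau_bij C' F P2).injective
    have h2 := congrFun (congrArg DFunLike.coe (tau_nat C' F d2)) z
    simp only [LinearMap.coe_comp, Function.comp_apply] at h2
    rw [h2, hz, map_zero]
    ext x
    exact congrFun (congrArg DFunLike.coe hee2) x
  -- exactness of Hom(P₀,C')⊗F → Hom(P₁,C')⊗F → Hom(P₂,C')⊗F
  have hexact : Function.Exact (LinearMap.lcomp R C' d1) (LinearMap.lcomp R C' d2) := by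
    intro φ
    constructor
    · intro h0
      obtain ⟨ψ, hψ⟩ := hext φ (by ext x; exact congrFun (congrArg DFunLike.coe h0) x)
      exact ⟨ψ, hψ.symm⟩
    · rintro ⟨ψ, rfl⟩
      ext x
      simp only [LinearMap.lcomp_apply, LinearMap.coe_comp, Function.comp_apply]
      rw [show d1 (d2 x) = (d1 ∘ₗ d2) x from rfl, hd12]
      simp
  have hexactF := Module.Flat.rTensor_exact (M := F) hexact
  obtain ⟨w, hw⟩ := (hexactF z).mp hz2
  -- h := τ₀ w satisfies ee = h ∘ₗ d1
  set h : P0 →ₗ[R] C' ⊗[R] F := rTensorHomToHomRTensor (RingHom.id R) P0 C' F w with hh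
  have hnat := congrFun (congrArg DFunLike.coe (tau_nat C' F d1)) w
  simp only [LinearMap.coe_comp, Function.comp_apply] at hnat
  have heed1 : ee = h ∘ₗ d1 := by rw [← hz, ← hw, hnat]; rfl
  -- h' : P0 → E through ker q
  let h' : P0 →ₗ[R] E := (LinearMap.ker q).subtype ∘ₗ (e.symm.toLinearMap ∘ₗ h)
  have hq_h' : q ∘ₗ h' = 0 := by
    ext x
    exact (e.symm (h x)).2
  have hfac : ∀ x : P1, (g0 - h') (d1 x) = 0 := by
    intro x
    have h1 : h (d1 x) = ee x := by rw [heed1]; rfl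
    simp only [LinearMap.sub_apply, h', LinearMap.coe_comp, Function.comp_apply,
      LinearEquiv.coe_coe, Submodule.coe_subtype]
    rw [h1]
    simp only [ee, LinearMap.coe_comp, Function.comp_apply, LinearEquiv.coe_coe]
    rw [LinearEquiv.symm_apply_apply]
    simp [g1, sub_eq_zero]
  -- factor g0 - h' through p
  have hle : LinearMap.ker p ≤ LinearMap.ker (g0 - h') := by
    intro x hx
    obtain ⟨y, rfl⟩ := hker x hx
    exact hfac y
  let ℓ0 : (P0 ⧸ LinearMap.ker p) →ₗ[R] E := Submodule.liftQ _ (g0 - h') hle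
  let eqv := p.quotKerEquivOfSurjective hp
  let ℓ : C' →ₗ[R] E := ℓ0 ∘ₗ eqv.symm.toLinearMap
  have hℓ : ∀ x : P0, ℓ (p x) = (g0 - h') x := by
    intro x
    have : eqv.symm (p x) = Submodule.Quotient.mk x := by
      apply eqv.injective
      rw [LinearEquiv.apply_symm_apply]
      rfl
    simp only [ℓ, LinearMap.coe_comp, Function.comp_apply, LinearEquiv.coe_coe, this]
    rfl
  refine ⟨ℓ, ?_⟩
  ext c
  obtain ⟨x, rfl⟩ := hp c
  simp only [LinearMap.coe_comp, Function.comp_apply, hℓ x]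
  have hqg0 : q (g0 x) = f (p x) := congrFun (congrArg DFunLike.coe hg0) x
  have hqh' : q (h' x) = 0 := congrFun (congrArg DFunLike.coe hq_h') x
  simp [map_sub, hqg0, hqh']

/-- Lifting maps from `C' ⊗ P`, `P` projective, along `q` whose kernel is `C`-flat,
assuming the `C'`-lifting property. -/
lemma lift2 (C' : Type) [AddCommGroup C'] [Module R C']
    (P : Type) [AddCommGroup P] [Module R P] [Module.Projective R P]
    (E M : Type) [AddCommGroup E] [Module R E] [AddCommGroup M] [Module R M]
    (q : E →ₗ[R] M)
    (hlift : ∀ f : C' →ₗ[R] M, ∃ g : C' →ₗ[R] E, q ∘ₗ g = f)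
    (f : C' ⊗[R] P →ₗ[R] M) : ∃ g : C' ⊗[R] P →ₗ[R] E, q ∘ₗ g = f := by
  -- postcomposition with q on Hom(C', -) is surjective
  have hsurj : Function.Surjective ((LinearMap.llcomp (σ₁₂ := RingHom.id R) (σ₂₃ := RingHom.id R) (σ₁₃ := RingHom.id R) R C' E M) q) := by
    intro φ
    obtain ⟨g, hg⟩ := hlift φ
    exact ⟨g, hg⟩
  obtain ⟨G, hG⟩ := Module.projective_lifting_property ((LinearMap.llcomp (σ₁₂ := RingHom.id R) (σ₂₃ := RingHom.id R) (σ₁₃ := RingHom.id R) R C' E M) q)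
    ((TensorProduct.curry f).flip) hsurj
  refine ⟨TensorProduct.lift G.flip, ?_⟩
  apply TensorProduct.ext'
  intro c x
  have := congrFun (congrArg DFunLike.coe hG) x
  have h2 := congrFun (congrArg DFunLike.coe this) c
  simpa using h2

/-- The lifting property for maps from `C` along surjections with `C`-flat kernel,
given a degreewise finite projective resolution and Ext¹-vanishing. -/
lemma sd_lift' (C : ModuleCat.{0} R) (PR : ProjectiveResolution C)
    (hfin : ∀ n, Module.Finite R ↥(PR.complex.X n))
    (hsub : Subsingleton (((Ext R (ModuleCat.{0} R) 1).obj (Opposite.op C)).obj C))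
    (F : Type) [AddCommGroup F] [Module R F] [Module.Flat R F]
    (E M : Type) [AddCommGroup E] [Module R E] [AddCommGroup M] [Module R M]
    (q : E →ₗ[R] M) (hq : Function.Surjective q)
    (e : (LinearMap.ker q) ≃ₗ[R] (↥C ⊗[R] F)) (f : ↥C →ₗ[R] M) :
    ∃ g : ↥C →ₗ[R] E, q ∘ₗ g = f := by
  set P := PR.complex with hP
  haveI h0 : Module.Projective R ↥(P.X 0) := (IsProjective.iff_projective _).mpr (PR.projective 0)
  haveI h1 : Module.Projective R ↥(P.X 1) := (IsProjective.iff_projective _).mpr (PR.projective 1)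
  haveI h2 : Module.Projective R ↥(P.X 2) := (IsProjective.iff_projective _).mpr (PR.projective 2)
  haveI f1 : Module.Finite R ↥(P.X 1) := hfin 1
  haveI f2 : Module.Finite R ↥(P.X 2) := hfin 2
  have hp : Function.Surjective (PR.π.f 0) :=
    (ModuleCat.epi_iff_surjective (PR.π.f 0)).mp inferInstance
  have hpd1 : (PR.π.f 0).hom ∘ₗ (P.d 1 0).hom = 0 := by
    rw [← ModuleCat.hom_comp, PR.complex_d_comp_π_f_zero]; rfl
  have hd12 : (P.d 1 0).hom ∘ₗ (P.d 2 1).hom = 0 := by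
    rw [← ModuleCat.hom_comp, P.d_comp_d 2 1 0]; rfl
  have hker : ∀ x, (PR.π.f 0) x = 0 → ∃ y, (P.d 1 0) y = x :=
    (ShortComplex.moduleCat_exact_iff _).mp PR.exact₀
  have hext : ∀ φ : ↥(P.X 1) →ₗ[R] ↥C, φ ∘ₗ (P.d 2 1).hom = 0 →
      ∃ ψ : ↥(P.X 0) →ₗ[R] ↥C, φ = ψ ∘ₗ (P.d 1 0).hom := by
    have hiso := PR.isoExt (R := R) 1 C
    haveI hsub2 : Subsingleton ↥((P.linearYonedaObj R C).homology 1) :=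
      (Equiv.subsingleton_congr hiso.toLinearEquiv.toEquiv).mp hsub
    have hzero : IsZero ((P.linearYonedaObj R C).homology 1) :=
      ModuleCat.isZero_of_subsingleton _
    have hexactAt : (P.linearYonedaObj R C).ExactAt 1 :=
      (HomologicalComplex.exactAt_iff_isZero_homology _ _).mpr hzero
    rw [HomologicalComplex.exactAt_iff' _ 0 1 2
      ((ComplexShape.up ℕ).prev_eq' (by simp)) ((ComplexShape.up ℕ).next_eq' rfl)] at hexactAt
    have hconc := (ShortComplex.moduleCat_exact_iff _).mp hexactAt
    intro φ hφ
    obtain ⟨ψ, hψ⟩ := hconc (ModuleCat.ofHom φ) (by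
      show (P.d 2 1) ≫ ModuleCat.ofHom φ = 0
      exact ModuleCat.hom_ext hφ)
    exact ⟨ψ.hom, congrArg ModuleCat.Hom.hom hψ.symm⟩
  exact ext1_lift ↥C ↥(P.X 0) ↥(P.X 1) ↥(P.X 2) (P.d 1 0).hom (P.d 2 1).hom (PR.π.f 0).hom
    hp hpd1 hd12 hker hext F E M q hq e f

/-- The lifting property for maps from `C` along surjections with `C`-flat kernel. -/
lemma sd_lift (C : ModuleCat.{0} R) (hC : IsSemidualizing R C)
    (F : Type) [AddCommGroup F] [Module R F] [Module.Flat R F]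
    (E M : Type) [AddCommGroup E] [Module R E] [AddCommGroup M] [Module R M]
    (q : E →ₗ[R] M) (hq : Function.Surjective q)
    (e : (LinearMap.ker q) ≃ₗ[R] (↥C ⊗[R] F)) (f : ↥C →ₗ[R] M) :
    ∃ g : ↥C →ₗ[R] E, q ∘ₗ g = f := by
  obtain ⟨P, π, hproj, hfin, hqis⟩ := hC.resolution
  exact sd_lift' C { complex := P, projective := hproj, π := π, quasiIso := hqis }
    hfin (hC.ext_vanish 1 one_pos) F E M q hq e f

/-- Each `toCycles` map of a `C`-projective complex admits a section. -/
lemma exists_section (C : ModuleCat.{0} R) (hC : IsSemidualizing R C)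
    (X : Cx R) (hX : IsCProjCx R C X) (i : ℤ) :
    ∃ σ : X.cycles (i + 1) ⟶ X.X i, σ ≫ X.toCycles i (i + 1) = 𝟙 _ := by
  obtain ⟨hexact, hcyc⟩ := hX
  obtain ⟨P', hP'proj, ⟨isoI⟩⟩ := hcyc i
  obtain ⟨P, hPproj, ⟨isoI1⟩⟩ := hcyc (i + 1)
  haveI : Module.Projective R ↥P := (IsProjective.iff_projective _).mpr hPproj
  haveI : Module.Projective R ↥P' := (IsProjective.iff_projective _).mpr hP'proj
  haveI : Module.Flat R ↥P' := inferInstance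
  set πc := X.toCycles i (i + 1) with hπc
  have hι1 : Function.Injective (X.iCycles (i + 1)) :=
    (ModuleCat.mono_iff_injective (X.iCycles (i + 1))).mp inferInstance
  have hιi : Function.Injective (X.iCycles i) :=
    (ModuleCat.mono_iff_injective (X.iCycles i)).mp inferInstance
  have hd_eq : ∀ y : ↥(X.X i), X.d i (i + 1) y = X.iCycles (i + 1) (πc y) := by
    intro y
    rw [← ConcreteCategory.comp_apply, hπc, X.toCycles_i]
  -- surjectivity of toCycles
  have hsurj : Function.Surjective πc.hom := by
    intro z
    have hz : X.d (i + 1) (i + 1 + 1) (X.iCycles (i + 1) z) = 0 := by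
      exact ConcreteCategory.congr_hom (X.iCycles_d (i + 1) (i + 1 + 1)) z
    have hEx := hexact (i + 1)
    rw [HomologicalComplex.exactAt_iff' _ i (i + 1) (i + 1 + 1)
      ((ComplexShape.up ℤ).prev_eq' (by simp)) ((ComplexShape.up ℤ).next_eq' rfl)] at hEx
    obtain ⟨y, hy⟩ := (ShortComplex.moduleCat_exact_iff _).mp hEx (X.iCycles (i + 1) z) hz
    refine ⟨y, hι1 ?_⟩
    exact (hd_eq y).symm.trans hy
  -- the kernel of toCycles is the cycles at i
  set πlin : ↥(X.X i) →ₗ[R] ↥(X.cycles (i + 1)) := πc.hom with hπlin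
  have hmem : ∀ z : ↥(X.cycles i), X.iCycles i z ∈ LinearMap.ker πlin := by
    intro z
    have h1 : X.d i (i + 1) (X.iCycles i z) = 0 :=
      ConcreteCategory.congr_hom (X.iCycles_d i (i + 1)) z
    have := hd_eq (X.iCycles i z)
    rw [h1] at this
    exact hι1 (by simpa using this.symm)
  let back : ↥(X.cycles i) →ₗ[R] ↥(LinearMap.ker πlin) :=
    LinearMap.codRestrict _ (X.iCycles i).hom hmem
  let k : ModuleCat.of R ↥(LinearMap.ker πlin) ⟶ X.X i := ModuleCat.ofHom (LinearMap.ker πlin).subtype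
  have hk : k ≫ X.d i (i + 1) = 0 := by
    ext x
    show X.d i (i + 1) x.val = 0
    rw [hd_eq]
    have : πlin x.val = 0 := x.2
    rw [this, map_zero]
  let lift : ModuleCat.of R ↥(LinearMap.ker πlin) ⟶ X.cycles i :=
    X.liftCycles k (i + 1) ((ComplexShape.up ℤ).next_eq' rfl) hk
  have hlift_i : ∀ x, X.iCycles i (lift x) = x.val := by
    intro x
    exact ConcreteCategory.congr_hom (X.liftCycles_i k (i + 1) _ hk) x
  have eq1 : ↥(X.cycles i) ≃ₗ[R] ↥(LinearMap.ker πlin) := by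
    refine LinearEquiv.ofLinear back lift.hom ?_ ?_
    · ext x
      exact hlift_i x
    · ext z
      apply hιi
      show X.iCycles i (lift (back z)) = X.iCycles i z
      rw [hlift_i]
      rfl
  let e : ↥(LinearMap.ker πlin) ≃ₗ[R] (↥C ⊗[R] ↥P') := eq1.symm ≪≫ₗ isoI.toLinearEquiv
  have hlift := fun f => sd_lift C hC ↥P' ↥(X.X i) ↥(X.cycles (i + 1)) πlin hsurj e f
  let e2 : ↥(X.cycles (i + 1)) ≃ₗ[R] (↥C ⊗[R] ↥P) := isoI1.toLinearEquiv
  obtain ⟨g, hg⟩ := lift2 ↥C ↥P ↥(X.X i) ↥(X.cycles (i + 1)) πlin hlift e2.symm.toLinearMap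
  refine ⟨ModuleCat.ofHom (g ∘ₗ e2.toLinearMap : ↥(X.cycles (i+1)) →ₗ[R] ↥(X.X i)), ?_⟩
  ext z
  show πlin (g (e2 z)) = z
  have := congrFun (congrArg DFunLike.coe hg) (e2 z)
  simp only [LinearMap.coe_comp, Function.comp_apply] at this
  rw [this]
  exact e2.symm_apply_apply z

/-- A complex all of whose `toCycles` maps split is null-homotopic. -/
def contractionOfSections (X : Cx R) (σ : ∀ i : ℤ, X.cycles (i + 1) ⟶ X.X i)
    (hσ : ∀ i, σ i ≫ X.toCycles i (i + 1) = 𝟙 _) : Homotopy (𝟙 X) 0 := by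
  classical
  have hσd : ∀ i, σ i ≫ X.d i (i + 1) = X.iCycles (i + 1) := by
    intro i
    rw [← X.toCycles_i i (i + 1), ← Category.assoc, hσ i, Category.id_comp]
  have hkey : ∀ i : ℤ, (𝟙 (X.X i) - X.toCycles i (i + 1) ≫ σ i) ≫ X.d i (i + 1) = 0 := by
    intro i
    rw [Preadditive.sub_comp, Category.id_comp, Category.assoc, hσd i, X.toCycles_i]
    simp
  let r : ∀ i : ℤ, X.X i ⟶ X.cycles i := fun i =>
    X.liftCycles (𝟙 (X.X i) - X.toCycles i (i + 1) ≫ σ i) (i + 1)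
      ((ComplexShape.up ℤ).next_eq' rfl) (hkey i)
  have hr : ∀ i, r i ≫ X.iCycles i = 𝟙 (X.X i) - X.toCycles i (i + 1) ≫ σ i := fun i =>
    X.liftCycles_i _ _ _ _
  have hdπ : ∀ i : ℤ, X.d i (i + 1) ≫ X.toCycles (i + 1) (i + 1 + 1) = 0 := by
    intro i
    rw [← cancel_mono (X.iCycles (i + 1 + 1)), Category.assoc, X.toCycles_i]
    simp
  have hdr : ∀ i : ℤ, X.d i (i + 1) ≫ r (i + 1) = X.toCycles i (i + 1) := by
    intro i
    rw [← cancel_mono (X.iCycles (i + 1)), Category.assoc, hr (i + 1)]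
    rw [Preadditive.comp_sub, Category.comp_id, ← Category.assoc, hdπ i]
    rw [X.toCycles_i]
    simp
  exact
    { hom := fun i j =>
        if h : j + 1 = i then
          r i ≫ eqToHom (show X.cycles i = X.cycles (j + 1) by rw [h]) ≫ σ j
        else 0
      zero := by
        intro i j hij
        exact dif_neg (fun h => hij h)
      comm := by
        intro i
        obtain ⟨j, rfl⟩ : ∃ j, i = j + 1 := ⟨i - 1, by omega⟩
        rw [dNext_eq _ (show (ComplexShape.up ℤ).Rel (j + 1) (j + 1 + 1) from rfl),
          prevD_eq _ (show (ComplexShape.up ℤ).Rel j (j + 1) from rfl)]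
        simp only [eq_self_iff_true, dite_true, eqToHom_refl, Category.id_comp,
          HomologicalComplex.id_f, HomologicalComplex.zero_f_apply, add_zero]
        rw [← Category.assoc (X.d (j + 1) (j + 1 + 1)), hdr (j + 1),
          Category.assoc (r (j + 1)), hσd j, hr (j + 1)]
        abel }

open CochainComplex.HomComplex in
/-- If `𝟙 X` is null-homotopic then the Hom complex `𝓗om(X,H)` is exact everywhere. -/
lemma homComplex_exactAt_of_contractible (X H : Cx R) (ho : Homotopy (𝟙 X) (0 : X ⟶ X))
    (n : ℤ) : (CochainComplex.HomComplex X H).ExactAt n := by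
  rw [HomologicalComplex.exactAt_iff' _ (n - 1) n (n + 1)
    ((ComplexShape.up ℤ).prev_eq' (by simp)) ((ComplexShape.up ℤ).next_eq' rfl)]
  rw [ShortComplex.ab_exact_iff]
  intro (z : Cochain X H n) hz
  have hz' : δ n (n + 1) z = 0 := hz
  have hδh : δ (-1) 0 (Cochain.ofHomotopy ho) = Cochain.ofHom (𝟙 X) := by
    rw [δ_ofHomotopy]
    simp
  set w : Cochain X H (n - 1) := (Cochain.ofHomotopy ho).comp z (show (-1) + n = n - 1 by ring)
    with hw
  have hδw : δ (n - 1) n w = n.negOnePow • z := by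
    rw [hw, δ_comp (Cochain.ofHomotopy ho) z (show (-1) + n = n - 1 by ring) 0 (n + 1) n
      (by ring) (by ring) rfl, hz', Cochain.comp_zero, zero_add, hδh, Cochain.id_comp]
  refine ⟨n.negOnePow • w, ?_⟩
  show δ (n - 1) n (n.negOnePow • w) = z
  rw [δ_units_smul, hδw, smul_smul, Int.units_mul_self, one_smul]

end AuxProof

/-- If `X` is a `C`-projective complex, then `𝓗om(X,H)` is exact for every
`C`-flat complex `H`. -/
theorem homComplexExact_of_cProjCx (C : ModuleCat.{0} R) (hC : IsSemidualizing R C)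
    (X : Cx R) (hX : IsCProjCx R C X) :
    ∀ H : Cx R, IsCFlatCx R C H → HomComplexExact R X H := by
  intro H _hH n
  exact homComplex_exactAt_of_contractible X H
    (contractionOfSections X (fun i => (exists_section C hC X hX i).choose)
      (fun i => (exists_section C hC X hX i).choose_spec)) n
end
end
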